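/- arXiv:cs/0205046 — 2 statements merged into one kernel-verified Lean document; each statement's English description precedes it below -/
import Mathlib

section
/- For any m×n matrix A, the value V(A) = min over probability column-strategies x of max over rows of A_i · x equals max over probability row-strategies y of min over columns j of (A^T)_j · y (von Neumann minimax for matrix games). -/
open scoped BigOperators

noncomputable def gameValue (m n : ℕ) (A : Matrix (Fin m) (Fin n) ℝ) : ℝ :=
  ⨅ x : stdSimplex ℝ (Fin n), ⨆ i : Fin m, ∑ j, A i j * (x : Fin n → ℝ) j

private lemma unif_mem_stdSimplex (n : ℕ) (hn : 0 < n) :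
    (fun _ => (n : ℝ)⁻¹) ∈ stdSimplex ℝ (Fin n) := by
  constructor
  · intro _; positivity
  · simp [Finset.sum_const, Finset.card_univ]
    field_simp

/-- Theorem of the alternative for matrix games. -/
private lemma alternative (m n : ℕ) (hm : 0 < m) (hn : 0 < n)
    (B : Matrix (Fin m) (Fin n) ℝ) :
    (∃ x ∈ stdSimplex ℝ (Fin n), ∀ i, ∑ j, B i j * x j ≤ 0) ∨
    (∃ y ∈ stdSimplex ℝ (Fin m), ∀ j, 0 < ∑ i, y i * B i j) := by
  by_cases h : ∃ x ∈ stdSimplex ℝ (Fin n), ∀ i, ∑ j, B i j * x j ≤ 0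
  · exact Or.inl h
  right
  push_neg at h
  -- the linear map x ↦ Bx
  set L : (Fin n → ℝ) →ₗ[ℝ] (Fin m → ℝ) :=
    { toFun := fun x i => ∑ j, B i j * x j
      map_add' := by
        intro x y; funext i
        simp [mul_add, Finset.sum_add_distrib]
      map_smul' := by
        intro a x; funext i
        simp [Finset.mul_sum]; congr 1; funext j; ring } with hL
  have hLapp : ∀ x i, L x i = ∑ j, B i j * x j := fun x i => rfl
  set S : Set (Fin m → ℝ) := L '' stdSimplex ℝ (Fin n) with hS
  set O : Set (Fin m → ℝ) := {z | ∀ i, z i ≤ 0} with hO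
  have hScomp : IsCompact S := by
    apply (isCompact_stdSimplex _ _).image
    have : (L : (Fin n → ℝ) → (Fin m → ℝ)) = fun x i => ∑ j, B i j * x j := rfl
    rw [this]
    exact continuous_pi fun i =>
      continuous_finset_sum _ fun j _ => continuous_const.mul (continuous_apply j)
  have hSconv : Convex ℝ S := (convex_stdSimplex ℝ _).linear_image L
  have hOclosed : IsClosed O := by
    have : O = ⋂ i, {z : Fin m → ℝ | z i ≤ 0} := by
      ext z; simp [hO, Set.mem_iInter]
    rw [this]
    exact isClosed_iInter fun i => isClosed_le (continuous_apply i) continuous_const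
  have hOconv : Convex ℝ O := by
    intro z hz w hw a b ha hb hab i
    have h1 := hz i
    have h2 := hw i
    simp only [Pi.add_apply, Pi.smul_apply, smul_eq_mul]
    nlinarith
  have hdisj : Disjoint S O := by
    rw [Set.disjoint_left]
    rintro z ⟨x, hx, rfl⟩ hzO
    obtain ⟨i, hi⟩ := h x hx
    exact absurd (hzO i) (not_le.2 hi)
  obtain ⟨f, u, v, hfu, huv, hfv⟩ :=
    geometric_hahn_banach_compact_closed hSconv hScomp hOconv hOclosed hdisj
  set c : Fin m → ℝ := fun i => f (Pi.single i (1 : ℝ)) with hc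
  have hf_eq : ∀ z : Fin m → ℝ, f z = ∑ i, z i * c i := by
    intro z
    have hz : z = ∑ i, z i • (Pi.single i (1 : ℝ) : Fin m → ℝ) := by
      funext k
      simp [Pi.single_apply, Finset.sum_apply]
    conv_lhs => rw [hz]
    rw [map_sum]
    simp [smul_eq_mul]
    rfl
  have hv0 : v < 0 := by
    have h0 : (0 : Fin m → ℝ) ∈ O := fun i => le_rfl
    have := hfv 0 h0
    simpa using this
  have hcneg : ∀ i, c i ≤ 0 := by
    intro i
    by_contra hci
    push_neg at hci
    set t : ℝ := (|v| + 1) / c i with ht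
    have htpos : 0 < t := by positivity
    have hmem : (-t) • (Pi.single i (1 : ℝ) : Fin m → ℝ) ∈ O := by
      intro k
      simp only [Pi.smul_apply, smul_eq_mul, Pi.single_apply]
      by_cases hk : k = i <;> simp [hk] <;> nlinarith
    have := hfv _ hmem
    rw [map_smul] at this
    have hfi : f (Pi.single i (1 : ℝ) : Fin m → ℝ) = c i := rfl
    rw [hfi] at this
    have : v < -t * c i := by simpa using this
    have htc : t * c i = |v| + 1 := by
      rw [ht]; field_simp
    have habs := neg_abs_le v
    nlinarith
  set s : ℝ := ∑ i, -c i with hs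
  have hsnn : 0 ≤ s := Finset.sum_nonneg fun i _ => by linarith [hcneg i]
  have hsne : s ≠ 0 := by
    intro hs0
    have hall : ∀ i ∈ Finset.univ, -c i = 0 :=
      (Finset.sum_eq_zero_iff_of_nonneg fun i _ => by linarith [hcneg i]).1 hs0
    have hf0 : ∀ z : Fin m → ℝ, f z = 0 := by
      intro z
      rw [hf_eq]
      apply Finset.sum_eq_zero
      intro i _
      have := hall i (Finset.mem_univ i)
      have : c i = 0 := by linarith
      rw [this, mul_zero]
    have hx0 := unif_mem_stdSimplex n hn
    have := hfu (L (fun _ => (n : ℝ)⁻¹)) ⟨_, hx0, rfl⟩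
    rw [hf0] at this
    linarith
  have hspos : 0 < s := lt_of_le_of_ne hsnn (Ne.symm hsne)
  refine ⟨fun i => -c i / s, ⟨fun i => div_nonneg (by linarith [hcneg i]) hspos.le, ?_⟩, ?_⟩
  · rw [← Finset.sum_div, ← hs, div_self hsne]
  · intro j
    have hxj : Pi.single j (1 : ℝ) ∈ stdSimplex ℝ (Fin n) := single_mem_stdSimplex ℝ j
    have hLej : L (Pi.single j 1) = fun i => B i j := by
      funext i
      simp [hLapp, Pi.single_apply]
    have hflt : f (L (Pi.single j 1)) < u := hfu _ ⟨_, hxj, rfl⟩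
    have hneg : f (L (Pi.single j 1)) < 0 := by linarith
    rw [hLej, hf_eq] at hneg
    have key : ∑ i, (-c i / s) * B i j = (∑ i, -(B i j * c i)) / s := by
      rw [Finset.sum_div]
      exact Finset.sum_congr rfl fun i _ => by ring
    rw [key]
    apply div_pos _ hspos
    have hns : (∑ i, -(B i j * c i)) = -(∑ i, B i j * c i) := by simp
    rw [hns]
    linarith

/-- von Neumann's minimax theorem for finite matrix games. -/
theorem stmt1 (m n : ℕ) (hm : 0 < m) (hn : 0 < n)
    (A : Matrix (Fin m) (Fin n) ℝ) :
    gameValue m n A =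
      ⨆ y : stdSimplex ℝ (Fin m), ⨅ j : Fin n, ∑ i, (y : Fin m → ℝ) i * A i j := by
  haveI : Nonempty (stdSimplex ℝ (Fin n)) := ⟨⟨_, unif_mem_stdSimplex n hn⟩⟩
  haveI : Nonempty (stdSimplex ℝ (Fin m)) := ⟨⟨_, unif_mem_stdSimplex m hm⟩⟩
  haveI : Nonempty (Fin m) := ⟨⟨0, hm⟩⟩
  haveI : Nonempty (Fin n) := ⟨⟨0, hn⟩⟩
  unfold gameValue
  set R : ℝ := ∑ i, ∑ j, |A i j| with hR
  have hrow_bound : ∀ x ∈ stdSimplex ℝ (Fin n), ∀ i, |∑ j, A i j * x j| ≤ R := by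
    intro x hx i
    have h1 : |∑ j, A i j * x j| ≤ ∑ j, |A i j * x j| := Finset.abs_sum_le_sum_abs _ _
    have h2 : ∑ j, |A i j * x j| ≤ ∑ j, |A i j| := by
      apply Finset.sum_le_sum; intro j _
      rw [abs_mul, abs_of_nonneg (hx.1 j)]
      have hxle : x j ≤ 1 := by
        rw [← hx.2]; exact Finset.single_le_sum (fun k _ => hx.1 k) (Finset.mem_univ j)
      nlinarith [abs_nonneg (A i j)]
    have h3 : ∑ j, |A i j| ≤ R :=
      Finset.single_le_sum
        (f := fun i => ∑ j, |A i j|)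
        (fun i _ => Finset.sum_nonneg fun j _ => abs_nonneg _) (Finset.mem_univ i)
    linarith
  have hcol_bound : ∀ y ∈ stdSimplex ℝ (Fin m), ∀ j, |∑ i, y i * A i j| ≤ R := by
    intro y hy j
    have h1 : |∑ i, y i * A i j| ≤ ∑ i, |y i * A i j| := Finset.abs_sum_le_sum_abs _ _
    have h2 : ∑ i, |y i * A i j| ≤ ∑ i, |A i j| := by
      apply Finset.sum_le_sum; intro i _
      rw [abs_mul, abs_of_nonneg (hy.1 i)]
      have hyle : y i ≤ 1 := by
        rw [← hy.2]; exact Finset.single_le_sum (fun k _ => hy.1 k) (Finset.mem_univ i)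
      nlinarith [abs_nonneg (A i j)]
    have h3 : ∑ i, |A i j| ≤ R := by
      calc ∑ i, |A i j| ≤ ∑ i, ∑ j', |A i j'| :=
            Finset.sum_le_sum fun i _ =>
              Finset.single_le_sum (f := fun j' => |A i j'|)
                (fun k _ => abs_nonneg _) (Finset.mem_univ j)
        _ = R := rfl
    linarith
  have hbbF : ∀ x : stdSimplex ℝ (Fin n),
      BddAbove (Set.range fun i : Fin m => ∑ j, A i j * (x : Fin n → ℝ) j) :=
    fun x => (Set.finite_range _).bddAbove
  have hbbG : ∀ y : stdSimplex ℝ (Fin m),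
      BddBelow (Set.range fun j : Fin n => ∑ i, (y : Fin m → ℝ) i * A i j) :=
    fun y => (Set.finite_range _).bddBelow
  have hF_lb : ∀ x : stdSimplex ℝ (Fin n),
      -R ≤ ⨆ i : Fin m, ∑ j, A i j * (x : Fin n → ℝ) j := by
    intro x
    obtain ⟨i0⟩ := (inferInstance : Nonempty (Fin m))
    refine le_trans ?_ (le_ciSup (hbbF x) i0)
    have := hrow_bound x x.2 i0
    have := neg_abs_le (∑ j, A i0 j * (x : Fin n → ℝ) j)
    linarith
  have hG_ub : ∀ y : stdSimplex ℝ (Fin m),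
      (⨅ j : Fin n, ∑ i, (y : Fin m → ℝ) i * A i j) ≤ R := by
    intro y
    obtain ⟨j0⟩ := (inferInstance : Nonempty (Fin n))
    refine le_trans (ciInf_le (hbbG y) j0) ?_
    have := hcol_bound y y.2 j0
    have := le_abs_self (∑ i, (y : Fin m → ℝ) i * A i j0)
    linarith
  have hBBV : BddBelow (Set.range fun x : stdSimplex ℝ (Fin n) =>
      ⨆ i : Fin m, ∑ j, A i j * (x : Fin n → ℝ) j) := by
    refine ⟨-R, ?_⟩; rintro _ ⟨x, rfl⟩; exact hF_lb x
  have hBAW : BddAbove (Set.range fun y : stdSimplex ℝ (Fin m) =>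
      ⨅ j : Fin n, ∑ i, (y : Fin m → ℝ) i * A i j) := by
    refine ⟨R, ?_⟩; rintro _ ⟨y, rfl⟩; exact hG_ub y
  have hweak : (⨆ y : stdSimplex ℝ (Fin m), ⨅ j : Fin n, ∑ i, (y : Fin m → ℝ) i * A i j)
      ≤ ⨅ x : stdSimplex ℝ (Fin n), ⨆ i : Fin m, ∑ j, A i j * (x : Fin n → ℝ) j := by
    apply ciSup_le
    intro y
    apply le_ciInf
    intro x
    have hx := x.2
    have hy := y.2
    have h1 : (⨅ j : Fin n, ∑ i, (y : Fin m → ℝ) i * A i j)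
        ≤ ∑ j, (∑ i, (y : Fin m → ℝ) i * A i j) * (x : Fin n → ℝ) j := by
      calc (⨅ j : Fin n, ∑ i, (y : Fin m → ℝ) i * A i j)
          = (⨅ j : Fin n, ∑ i, (y : Fin m → ℝ) i * A i j) * ∑ j, (x : Fin n → ℝ) j := by
            rw [show ∑ j, (x : Fin n → ℝ) j = 1 from hx.2, mul_one]
        _ = ∑ j, (⨅ j' : Fin n, ∑ i, (y : Fin m → ℝ) i * A i j') * (x : Fin n → ℝ) j := by
            rw [Finset.mul_sum]
        _ ≤ ∑ j, (∑ i, (y : Fin m → ℝ) i * A i j) * (x : Fin n → ℝ) j :=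
            Finset.sum_le_sum fun j _ =>
              mul_le_mul_of_nonneg_right (ciInf_le (hbbG y) j) (hx.1 j)
    have h2 : ∑ j, (∑ i, (y : Fin m → ℝ) i * A i j) * (x : Fin n → ℝ) j
        = ∑ i, (y : Fin m → ℝ) i * ∑ j, A i j * (x : Fin n → ℝ) j := by
      simp_rw [Finset.sum_mul, Finset.mul_sum, mul_assoc]
      exact Finset.sum_comm
    have h3 : ∑ i, (y : Fin m → ℝ) i * ∑ j, A i j * (x : Fin n → ℝ) j
        ≤ ⨆ i : Fin m, ∑ j, A i j * (x : Fin n → ℝ) j := by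
      calc ∑ i, (y : Fin m → ℝ) i * ∑ j, A i j * (x : Fin n → ℝ) j
          ≤ ∑ i, (y : Fin m → ℝ) i * ⨆ i' : Fin m, ∑ j, A i' j * (x : Fin n → ℝ) j :=
            Finset.sum_le_sum fun i _ =>
              mul_le_mul_of_nonneg_left (le_ciSup (hbbF x) i) (hy.1 i)
        _ = ⨆ i' : Fin m, ∑ j, A i' j * (x : Fin n → ℝ) j := by
            rw [← Finset.sum_mul, show ∑ i, (y : Fin m → ℝ) i = 1 from hy.2, one_mul]
    linarith
  refine le_antisymm ?_ hweak
  by_contra hlt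
  push_neg at hlt
  set W := ⨆ y : stdSimplex ℝ (Fin m), ⨅ j : Fin n, ∑ i, (y : Fin m → ℝ) i * A i j with hW
  set V := ⨅ x : stdSimplex ℝ (Fin n), ⨆ i : Fin m, ∑ j, A i j * (x : Fin n → ℝ) j with hV
  set cc := (V + W) / 2 with hcc
  have hWc : W < cc := by rw [hcc]; linarith
  have hcV : cc < V := by rw [hcc]; linarith
  rcases alternative m n hm hn (fun i j => A i j - cc) with ⟨x, hx, hxle⟩ | ⟨y, hy, hygt⟩
  · have hxc : ∀ i, ∑ j, A i j * x j ≤ cc := by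
      intro i
      have h0 := hxle i
      have hsum : ∑ j, (A i j - cc) * x j = (∑ j, A i j * x j) - cc := by
        simp only [sub_mul, Finset.sum_sub_distrib, ← Finset.mul_sum, hx.2, mul_one]
      simp only [hsum] at h0
      linarith
    have h1 : V ≤ ⨆ i : Fin m, ∑ j, A i j * x j := ciInf_le hBBV ⟨x, hx⟩
    have h2 : (⨆ i : Fin m, ∑ j, A i j * x j) ≤ cc := ciSup_le hxc
    linarith
  · have hyc : ∀ j, cc ≤ ∑ i, y i * A i j := by
      intro j
      have h0 := hygt j
      have hsum : ∑ i, y i * (A i j - cc) = (∑ i, y i * A i j) - cc := by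
        simp only [mul_sub, Finset.sum_sub_distrib, ← Finset.sum_mul, hy.2, one_mul]
      simp only [hsum] at h0
      linarith
    have h1 : cc ≤ ⨅ j : Fin n, ∑ i, y i * A i j := le_ciInf hyc
    have h2 : (⨅ j : Fin n, ∑ i, y i * A i j) ≤ W := le_ciSup hBAW ⟨y, hy⟩
    linarith
end

section
/- Suppose a deterministic algorithm solves the fractional packing problem x ∈ P, Ax ≤ b only via queries of the form 'given vector c, return a vertex of P minimizing c·x', making at most s queries, where P is the n-simplex. If every m×s submatrix B of A (s ≤ n columns) satisfies V(B) > (1+ε)V(A) and b is the all-V(A) vector, then the algorithm cannot output a point x in the convex hull of the returned vertices satisfying Ax ≤ (1+ε)b. -/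
open scoped BigOperators

/-- A Dantzig-Wolfe-type algorithm over the simplex making at most `s` oracle
queries receives `s` standard basis vectors; any point in their convex hull is
supported on a set `S` of at most `s` coordinates.  If every `m × s` column
submatrix `B` of `A` has `V(B) > (1+ε)V(A)`, then no point of the simplex
supported on `S` can satisfy `Ax ≤ (1+ε)b` where `b` is the all-`V(A)` vector. -/
theorem stmt10 (m n s : ℕ) (hm : 0 < m) (hs : 0 < s) (hsn : s ≤ n)
    (A : Matrix (Fin m) (Fin n) ℝ) (ε : ℝ) (hε : 0 < ε)
    (hsub : ∀ f : Fin s → Fin n, Function.Injective f →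
      gameValue m s (A.submatrix id f) > (1 + ε) * gameValue m n A)
    (S : Finset (Fin n)) (hS : S.card ≤ s) :
    ¬ ∃ x ∈ stdSimplex ℝ (Fin n), (∀ j ∉ S, x j = 0) ∧
        ∀ i : Fin m, ∑ j, A i j * x j ≤ (1 + ε) * gameValue m n A := by
  rintro ⟨x, hx, hx0, hxle⟩
  have : Nonempty (Fin m) := ⟨⟨0, hm⟩⟩
  obtain ⟨T, hST, hTcard⟩ := Finset.exists_superset_card_eq hS (by simpa using hsn)
  set f : Fin s → Fin n := fun k => (T.orderIsoOfFin hTcard k : Fin n) with hf_def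
  have hf : Function.Injective f := fun a b hab =>
    (T.orderIsoOfFin hTcard).injective (Subtype.ext hab)
  set B := A.submatrix id f with hB
  have himg : Finset.image f Finset.univ = T := by
    apply Finset.eq_of_subset_of_card_le
    · intro j hj
      obtain ⟨k, _, rfl⟩ := Finset.mem_image.1 hj
      exact (T.orderIsoOfFin hTcard k).2
    · rw [Finset.card_image_of_injective _ hf]
      simp [hTcard]
  have hsumT : ∀ g : Fin n → ℝ, ∑ k, g (f k) = ∑ j ∈ T, g j := by
    intro g
    rw [← himg, Finset.sum_image (fun a _ b _ h => hf h)]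
  have hx0T : ∀ j ∉ T, x j = 0 := fun j hj => hx0 j (fun hjS => hj (hST hjS))
  set y : Fin s → ℝ := fun k => x (f k) with hy_def
  have hy : y ∈ stdSimplex ℝ (Fin s) := by
    constructor
    · intro k; exact hx.1 (f k)
    · rw [show ∑ k, y k = ∑ j ∈ T, x j from hsumT x]
      rw [Finset.sum_subset (Finset.subset_univ T) (fun j _ hj => hx0T j hj)]
      exact hx.2
  have hrow : ∀ i : Fin m, ∑ k, B i k * y k = ∑ j, A i j * x j := by
    intro i
    rw [show (∑ k, B i k * y k) = ∑ k, A i (f k) * x (f k) from rfl,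
      hsumT (fun j => A i j * x j)]
    exact Finset.sum_subset (Finset.subset_univ T)
      (fun j _ hj => by rw [hx0T j hj, mul_zero])
  -- bounded below
  have hbdd : BddBelow (Set.range
      (fun z : stdSimplex ℝ (Fin s) => ⨆ i : Fin m, ∑ j, B i j * (z : Fin s → ℝ) j)) := by
    refine ⟨-∑ i, ∑ j, |B i j|, ?_⟩
    rintro _ ⟨z, rfl⟩
    have hz1 : ∀ k, (z : Fin s → ℝ) k ≤ 1 := by
      intro k
      calc (z : Fin s → ℝ) k ≤ ∑ j, (z : Fin s → ℝ) j :=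
            Finset.single_le_sum (fun j _ => z.2.1 j) (Finset.mem_univ k)
        _ = 1 := z.2.2
    set i0 : Fin m := ⟨0, hm⟩
    have h1 : -∑ j, |B i0 j| ≤ ∑ j, B i0 j * (z : Fin s → ℝ) j := by
      rw [← Finset.sum_neg_distrib]
      apply Finset.sum_le_sum
      intro j _
      have h2 : |B i0 j * (z : Fin s → ℝ) j| ≤ |B i0 j| := by
        rw [abs_mul]
        calc |B i0 j| * |(z : Fin s → ℝ) j| ≤ |B i0 j| * 1 := by
              apply mul_le_mul_of_nonneg_left _ (abs_nonneg _)
              rw [abs_of_nonneg (a := (z : Fin s → ℝ) j) (z.2.1 j)]; exact hz1 j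
          _ = |B i0 j| := mul_one _
      linarith [neg_abs_le (B i0 j * (z : Fin s → ℝ) j)]
    have h3 : (∑ j, |B i0 j|) ≤ ∑ i, ∑ j, |B i j| :=
      Finset.single_le_sum (f := fun i => ∑ j, |B i j|) (fun i _ => Finset.sum_nonneg fun j _ => abs_nonneg _)
        (Finset.mem_univ i0)
    calc -∑ i, ∑ j, |B i j| ≤ -∑ j, |B i0 j| := by linarith
      _ ≤ ∑ j, B i0 j * (z : Fin s → ℝ) j := h1
      _ ≤ ⨆ i : Fin m, ∑ j, B i j * (z : Fin s → ℝ) j :=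
          le_ciSup (f := fun i : Fin m => ∑ j, B i j * (z : Fin s → ℝ) j) (Set.Finite.bddAbove (Set.finite_range _)) i0
  have h1 : gameValue m s B ≤ ⨆ i : Fin m, ∑ j, B i j * y j :=
    ciInf_le hbdd (⟨y, hy⟩ : stdSimplex ℝ (Fin s))
  have h2 : (⨆ i : Fin m, ∑ j, B i j * y j) ≤ (1 + ε) * gameValue m n A :=
    ciSup_le fun i => (hrow i) ▸ hxle i
  exact absurd (hsub f hf) (not_lt.2 (h1.trans h2))
end
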